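/- Under the assumptions of the estimating-equations existence theorem (conditions (E.1)' and (E.2)'), the solution sequence θ̂_n with P(F_n(θ̂_n)=0) → 1 and ‖θ̂_n − θ₀‖ ≤ r_n (with probability tending to 1) is locally unique: for any other sequence θ̃_n with P(F_n(θ̃_n)=0) → 1 and P(‖θ̃_n − θ₀‖ ≤ r_n) → 1, one has P(θ̂_n = θ̃_n) → 1. -/

import Mathlib

open MeasureTheory Metric

private abbrev Euc (d : ℕ) := EuclideanSpace ℝ (Fin d)

/-- Deterministic uniqueness via contraction / mean value inequality. -/
lemma stmt14_key {d : ℕ} {Θ : Set (Euc d)} (hΘ : IsOpen Θ)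
    {θ₀ : Euc d} {f : Euc d → Euc d}
    (hf : ContDiffOn ℝ 1 f Θ)
    (Bc Cc W : Euc d ≃L[ℝ] Euc d)
    {rn ε : ℝ} (hball : closedBall θ₀ rn ⊆ Θ)
    (hε : ‖(W.symm : Euc d →L[ℝ] Euc d)‖ * ε < 1)
    (hder : ∀ θ ∈ closedBall θ₀ rn,
      ‖((Bc : Euc d →L[ℝ] Euc d).comp
          ((fderivWithin ℝ f Θ θ).comp (Cc : Euc d →L[ℝ] Euc d)))
        - (W : Euc d →L[ℝ] Euc d)‖ < ε)
    {x y : Euc d} (hx : x ∈ closedBall θ₀ rn) (hy : y ∈ closedBall θ₀ rn)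
    (hfx : f x = 0) (hfy : f y = 0) : x = y := by
  set Ws : Euc d →L[ℝ] Euc d := (W.symm : Euc d →L[ℝ] Euc d) with hWs
  set D : Set (Euc d) := (fun u => θ₀ + Cc u) ⁻¹' closedBall θ₀ rn with hD
  have hDconv : Convex ℝ D := by
    intro u hu v hv a b ha hb hab
    simp only [hD, Set.mem_preimage] at hu hv ⊢
    have h1 : a • θ₀ + b • θ₀ = θ₀ := by rw [← add_smul, hab, one_smul]
    have h2 : θ₀ + Cc (a • u + b • v) = a • (θ₀ + Cc u) + b • (θ₀ + Cc v) := by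
      rw [smul_add, smul_add, map_add, Cc.map_smul, Cc.map_smul, show
        a • θ₀ + a • Cc u + (b • θ₀ + b • Cc v)
          = (a • θ₀ + b • θ₀) + (a • Cc u + b • Cc v) by abel, h1]
    rw [h2]
    exact convex_closedBall θ₀ rn hu hv ha hb hab
  set φ : Euc d → Euc d := fun u => Ws (Bc (f (θ₀ + Cc u))) - u with hφ
  set L : Euc d → (Euc d →L[ℝ] Euc d) := fun u =>
    (Ws.comp ((Bc : Euc d →L[ℝ] Euc d).comp
      ((fderivWithin ℝ f Θ (θ₀ + Cc u)).comp (Cc : Euc d →L[ℝ] Euc d))))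
    - ContinuousLinearMap.id ℝ (Euc d) with hL
  have hders : ∀ u ∈ D, HasFDerivWithinAt φ (L u) D u := by
    intro u hu
    have hθ : θ₀ + Cc u ∈ closedBall θ₀ rn := hu
    have hθΘ : θ₀ + Cc u ∈ Θ := hball hθ
    have h1 : HasFDerivAt (fun u : Euc d => θ₀ + Cc u) (Cc : Euc d →L[ℝ] Euc d) u :=
      ((Cc : Euc d →L[ℝ] Euc d).hasFDerivAt).const_add θ₀
    have hdf : DifferentiableAt ℝ f (θ₀ + Cc u) :=
      ((hf.differentiableOn one_ne_zero) _ hθΘ).differentiableAt (hΘ.mem_nhds hθΘ)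
    have heq : fderivWithin ℝ f Θ (θ₀ + Cc u) = fderiv ℝ f (θ₀ + Cc u) :=
      fderivWithin_of_isOpen hΘ hθΘ
    have h2 : HasFDerivAt (fun v : Euc d => f (θ₀ + Cc v))
        ((fderiv ℝ f (θ₀ + Cc u)).comp (Cc : Euc d →L[ℝ] Euc d)) u := (hdf.hasFDerivAt).comp u h1
    have h3 : HasFDerivAt (fun v : Euc d => Ws (Bc (f (θ₀ + Cc v))))
        ((Ws.comp (Bc : Euc d →L[ℝ] Euc d)).comp
          ((fderiv ℝ f (θ₀ + Cc u)).comp (Cc : Euc d →L[ℝ] Euc d))) u :=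
      ((Ws.comp (Bc : Euc d →L[ℝ] Euc d)).hasFDerivAt).comp u h2
    have h4 := h3.sub (hasFDerivAt_id u)
    have hLeq : L u = (Ws.comp (Bc : Euc d →L[ℝ] Euc d)).comp
          ((fderiv ℝ f (θ₀ + Cc u)).comp (Cc : Euc d →L[ℝ] Euc d))
          - ContinuousLinearMap.id ℝ (Euc d) := by
      rw [hL]; simp only [heq]; ext z; rfl
    rw [hLeq]
    exact h4.hasFDerivWithinAt
  have hbound : ∀ u ∈ D, ‖L u‖ ≤ ‖Ws‖ * ε := by
    intro u hu
    have hθ : θ₀ + Cc u ∈ closedBall θ₀ rn := hu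
    have hLeq : L u = Ws.comp
        (((Bc : Euc d →L[ℝ] Euc d).comp
            ((fderivWithin ℝ f Θ (θ₀ + Cc u)).comp (Cc : Euc d →L[ℝ] Euc d)))
          - (W : Euc d →L[ℝ] Euc d)) := by
      ext z
      simp [hL, hWs, ContinuousLinearMap.sub_apply]
    rw [hLeq]
    calc ‖Ws.comp _‖ ≤ ‖Ws‖ * ‖((Bc : Euc d →L[ℝ] Euc d).comp
            ((fderivWithin ℝ f Θ (θ₀ + Cc u)).comp (Cc : Euc d →L[ℝ] Euc d)))
          - (W : Euc d →L[ℝ] Euc d)‖ := ContinuousLinearMap.opNorm_comp_le _ _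
      _ ≤ ‖Ws‖ * ε := mul_le_mul_of_nonneg_left (hder _ hθ).le (norm_nonneg _)
  set u := Cc.symm (x - θ₀) with hu'
  set v := Cc.symm (y - θ₀) with hv'
  have hxu : θ₀ + Cc u = x := by simp [hu']
  have hyv : θ₀ + Cc v = y := by simp [hv']
  have hu : u ∈ D := by simp only [hD, Set.mem_preimage, hxu]; exact hx
  have hv : v ∈ D := by simp only [hD, Set.mem_preimage, hyv]; exact hy
  have hφu : φ u = -u := by rw [hφ]; simp only [hxu, hfx, map_zero, zero_sub]
  have hφv : φ v = -v := by rw [hφ]; simp only [hyv, hfy, map_zero, zero_sub]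
  have hmv := hDconv.norm_image_sub_le_of_norm_hasFDerivWithin_le hders hbound hu hv
  rw [hφv, hφu] at hmv
  have hnn : ‖v - u‖ = 0 := by
    have h1 : ‖-v - -u‖ = ‖v - u‖ := by rw [show -v - -u = -(v - u) by abel, norm_neg]
    rw [h1] at hmv
    nlinarith [norm_nonneg (v - u)]
  have huv : v = u := by rwa [← sub_eq_zero, ← norm_eq_zero]
  rw [← hxu, ← hyv, huv]

/-- Carathéodory-style measurability of an evaluation. -/
lemma stmt14_meas_eval {Ω : Type*} [MeasurableSpace Ω] {d : ℕ}
    {s : Set (Euc d)}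
    (f : Ω → Euc d → Euc d)
    (hf : ∀ θ, Measurable fun ω => f ω θ)
    (hcont : ∀ ω, ContinuousOn (f ω) s)
    (g : Ω → Euc d) (hg : Measurable g) (hgs : ∀ ω, g ω ∈ s) :
    Measurable fun ω => f ω (g ω) := by
  set u : s → Ω → Euc d := fun θ ω => f ω θ with hu
  have h1 : Measurable (Function.uncurry u) :=
    measurable_uncurry_of_continuous_of_measurable
      (fun ω => (hcont ω).restrict) (fun θ => hf θ)
  exact h1.comp ((hg.subtype_mk (h := hgs)).prodMk measurable_id)

lemma stmt14_proj_mem {d : ℕ} (θ₀ z : Euc d) {rn : ℝ} (hrn : 0 < rn) :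
    θ₀ + (rn / max rn ‖z - θ₀‖) • (z - θ₀) ∈ closedBall θ₀ rn := by
  rw [mem_closedBall, dist_eq_norm]
  have hmax : 0 < max rn ‖z - θ₀‖ := lt_of_lt_of_le hrn (le_max_left _ _)
  have hc : 0 ≤ rn / max rn ‖z - θ₀‖ := div_nonneg hrn.le hmax.le
  have h1 : θ₀ + (rn / max rn ‖z - θ₀‖) • (z - θ₀) - θ₀
      = (rn / max rn ‖z - θ₀‖) • (z - θ₀) := by abel
  rw [h1, norm_smul, Real.norm_eq_abs, abs_of_nonneg hc, div_mul_eq_mul_div,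
    div_le_iff₀ hmax]
  exact mul_le_mul_of_nonneg_left (le_max_right _ _) hrn.le

lemma stmt14_proj_eq {d : ℕ} (θ₀ z : Euc d) {rn : ℝ} (hrn : 0 < rn)
    (h : ‖z - θ₀‖ ≤ rn) :
    θ₀ + (rn / max rn ‖z - θ₀‖) • (z - θ₀) = z := by
  rw [max_eq_left h, div_self hrn.ne', one_smul]
  abel

/-- Local uniqueness of solutions of estimating equations. Under
(E.1)' and (E.2)', any two sequences of random vectors `θ̂_n`, `θ̃_n` with
`P(F_n(·) = 0) → 1` and `P(‖· − θ₀‖ ≤ r_n) → 1` coincide with probability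
tending to one: `P(θ̂_n = θ̃_n) → 1`. -/
theorem stmt14 {d : ℕ} {Ω : Type*} [MeasurableSpace Ω] (P : Measure Ω) [IsProbabilityMeasure P]
    (Θ : Set (EuclideanSpace ℝ (Fin d))) (hΘ : IsOpen Θ)
    (θ₀ : EuclideanSpace ℝ (Fin d)) (hθ₀ : θ₀ ∈ Θ)
    (F : ℕ → Ω → EuclideanSpace ℝ (Fin d) → EuclideanSpace ℝ (Fin d))
    (hFmeas : ∀ n θ, Measurable (fun ω => F n ω θ))
    (hFC1 : ∀ n ω, ContDiffOn ℝ 1 (F n ω) Θ)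
    (A B C : ℕ → (EuclideanSpace ℝ (Fin d) ≃L[ℝ] EuclideanSpace ℝ (Fin d)))
    (W : EuclideanSpace ℝ (Fin d) ≃L[ℝ] EuclideanSpace ℝ (Fin d))
    (r : ℕ → ℝ) (hr : ∀ n, 0 < r n)
    (hball : ∀ n, closedBall θ₀ (r n) ⊆ Θ)
    -- (E.1)': A_n F_n(θ₀) = O_P(1)
    (hE1 : ∀ ε : ℝ, 0 < ε → ∃ M : ℝ, ∀ n,
      (P {ω | M < ‖(A n) (F n ω θ₀)‖}).toReal ≤ ε)
    -- (E.2)', part 1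
    (hE2a : ∀ ε : ℝ, 0 < ε → Filter.Tendsto
      (fun n => P {ω | ∃ θ ∈ closedBall θ₀ (r n),
        ε ≤ ‖((B n : EuclideanSpace ℝ (Fin d) →L[ℝ] EuclideanSpace ℝ (Fin d)).comp
              ((fderivWithin ℝ (F n ω) Θ θ).comp
                (C n : EuclideanSpace ℝ (Fin d) →L[ℝ] EuclideanSpace ℝ (Fin d))))
            - (W : EuclideanSpace ℝ (Fin d) →L[ℝ] EuclideanSpace ℝ (Fin d))‖})
      Filter.atTop (nhds 0))
    -- (E.2)', part 2
    (hE2b : Filter.Tendsto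
      (fun n => ‖(C n : EuclideanSpace ℝ (Fin d) →L[ℝ] EuclideanSpace ℝ (Fin d))‖
        * ‖((B n : EuclideanSpace ℝ (Fin d) →L[ℝ] EuclideanSpace ℝ (Fin d)).comp
            ((A n).symm : EuclideanSpace ℝ (Fin d) →L[ℝ] EuclideanSpace ℝ (Fin d)))‖
        / r n) Filter.atTop (nhds 0))
    -- the two candidate solution sequences
    (θhat θtil : ℕ → Ω → EuclideanSpace ℝ (Fin d))
    (hhatmeas : ∀ n, Measurable (θhat n)) (htilmeas : ∀ n, Measurable (θtil n))
    (hhatzero : Filter.Tendsto (fun n => (P {ω | F n ω (θhat n ω) = 0}).toReal)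
      Filter.atTop (nhds 1))
    (htilzero : Filter.Tendsto (fun n => (P {ω | F n ω (θtil n ω) = 0}).toReal)
      Filter.atTop (nhds 1))
    (hhatball : Filter.Tendsto (fun n => (P {ω | ‖θhat n ω - θ₀‖ ≤ r n}).toReal)
      Filter.atTop (nhds 1))
    (htilball : Filter.Tendsto (fun n => (P {ω | ‖θtil n ω - θ₀‖ ≤ r n}).toReal)
      Filter.atTop (nhds 1)) :
    Filter.Tendsto (fun n => (P {ω | θhat n ω = θtil n ω}).toReal)
      Filter.atTop (nhds 1) := by
  classical
  set ε : ℝ := (1 + ‖(W.symm : Euc d →L[ℝ] Euc d)‖)⁻¹ with hεdef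
  have h0 : (0:ℝ) < 1 + ‖(W.symm : Euc d →L[ℝ] Euc d)‖ :=
    lt_of_lt_of_le one_pos (by nlinarith [norm_nonneg (W.symm : Euc d →L[ℝ] Euc d)])
  have hεpos : 0 < ε := by rw [hεdef]; exact inv_pos.mpr h0
  have hε : ‖(W.symm : Euc d →L[ℝ] Euc d)‖ * ε < 1 := by
    have h1 : (1 + ‖(W.symm : Euc d →L[ℝ] Euc d)‖) * ε = 1 := by
      rw [hεdef]; exact mul_inv_cancel₀ h0.ne'
    nlinarith [hεpos]
  -- projections onto the closed balls
  set ψh : ℕ → Ω → Euc d := fun n ω =>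
    θ₀ + (r n / max (r n) ‖θhat n ω - θ₀‖) • (θhat n ω - θ₀) with hψh
  set ψt : ℕ → Ω → Euc d := fun n ω =>
    θ₀ + (r n / max (r n) ‖θtil n ω - θ₀‖) • (θtil n ω - θ₀) with hψt
  have hψhmem : ∀ n ω, ψh n ω ∈ closedBall θ₀ (r n) :=
    fun n ω => stmt14_proj_mem θ₀ (θhat n ω) (hr n)
  have hψtmem : ∀ n ω, ψt n ω ∈ closedBall θ₀ (r n) :=
    fun n ω => stmt14_proj_mem θ₀ (θtil n ω) (hr n)
  have hψheq : ∀ n ω, ‖θhat n ω - θ₀‖ ≤ r n → ψh n ω = θhat n ω :=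
    fun n ω h => stmt14_proj_eq θ₀ (θhat n ω) (hr n) h
  have hψteq : ∀ n ω, ‖θtil n ω - θ₀‖ ≤ r n → ψt n ω = θtil n ω :=
    fun n ω h => stmt14_proj_eq θ₀ (θtil n ω) (hr n) h
  have hψhmeas : ∀ n, Measurable (ψh n) := by
    intro n
    have hz : Measurable fun ω => θhat n ω - θ₀ := (hhatmeas n).sub measurable_const
    have hc : Measurable fun ω => r n / max (r n) ‖θhat n ω - θ₀‖ :=
      measurable_const.div (measurable_const.max hz.norm)
    exact measurable_const.add (hc.smul hz)
  have hψtmeas : ∀ n, Measurable (ψt n) := by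
    intro n
    have hz : Measurable fun ω => θtil n ω - θ₀ := (htilmeas n).sub measurable_const
    have hc : Measurable fun ω => r n / max (r n) ‖θtil n ω - θ₀‖ :=
      measurable_const.div (measurable_const.max hz.norm)
    exact measurable_const.add (hc.smul hz)
  -- the relevant events
  set s1 : ℕ → Set Ω := fun n => {ω | F n ω (θhat n ω) = 0} with hs1def
  set s2 : ℕ → Set Ω := fun n => {ω | F n ω (θtil n ω) = 0} with hs2def
  set s3 : ℕ → Set Ω := fun n => {ω | ‖θhat n ω - θ₀‖ ≤ r n} with hs3def
  set s3' : ℕ → Set Ω := fun n => {ω | ‖θtil n ω - θ₀‖ ≤ r n} with hs3'def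
  set s4 : ℕ → Set Ω := fun n => {ω | ∃ θ ∈ closedBall θ₀ (r n),
        ε ≤ ‖((B n : Euc d →L[ℝ] Euc d).comp
              ((fderivWithin ℝ (F n ω) Θ θ).comp (C n : Euc d →L[ℝ] Euc d)))
            - (W : Euc d →L[ℝ] Euc d)‖} with hs4def
  set t1 : ℕ → Set Ω := fun n => {ω | F n ω (ψh n ω) = 0} ∩ s3 n with ht1def
  set t2 : ℕ → Set Ω := fun n => {ω | F n ω (ψt n ω) = 0} ∩ s3' n with ht2def
  have hs3meas : ∀ n, MeasurableSet (s3 n) := fun n =>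
    measurableSet_le ((hhatmeas n).sub measurable_const).norm measurable_const
  have hs3'meas : ∀ n, MeasurableSet (s3' n) := fun n =>
    measurableSet_le ((htilmeas n).sub measurable_const).norm measurable_const
  have ht1meas : ∀ n, MeasurableSet (t1 n) := by
    intro n
    have hFe : Measurable fun ω => F n ω (ψh n ω) :=
      stmt14_meas_eval (s := Θ) (F n) (hFmeas n) (fun ω => (hFC1 n ω).continuousOn)
        (ψh n) (hψhmeas n) (fun ω => hball n (hψhmem n ω))
    exact (hFe (measurableSet_singleton 0)).inter (hs3meas n)
  have ht2meas : ∀ n, MeasurableSet (t2 n) := by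
    intro n
    have hFe : Measurable fun ω => F n ω (ψt n ω) :=
      stmt14_meas_eval (s := Θ) (F n) (hFmeas n) (fun ω => (hFC1 n ω).continuousOn)
        (ψt n) (hψtmeas n) (fun ω => hball n (hψtmem n ω))
    exact (hFe (measurableSet_singleton 0)).inter (hs3'meas n)
  -- inclusions
  have hinc1 : ∀ n, s1 n ∩ s3 n ⊆ t1 n := by
    intro n ω hω
    exact ⟨by rw [Set.mem_setOf_eq, hψheq n ω hω.2]; exact hω.1, hω.2⟩
  have hinc2 : ∀ n, s2 n ∩ s3' n ⊆ t2 n := by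
    intro n ω hω
    exact ⟨by rw [Set.mem_setOf_eq, hψteq n ω hω.2]; exact hω.1, hω.2⟩
  have hincl : ∀ n, t1 n ∩ t2 n ∩ (s4 n)ᶜ ⊆ {ω | θhat n ω = θtil n ω} := by
    intro n ω hω
    obtain ⟨⟨⟨hz1, hb1⟩, hz2, hb2⟩, h4⟩ := hω
    have hb1' : ‖θhat n ω - θ₀‖ ≤ r n := hb1
    have hb2' : ‖θtil n ω - θ₀‖ ≤ r n := hb2
    have hz1' : F n ω (θhat n ω) = 0 := by rw [← hψheq n ω hb1']; exact hz1
    have hz2' : F n ω (θtil n ω) = 0 := by rw [← hψteq n ω hb2']; exact hz2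
    have hder : ∀ θ ∈ closedBall θ₀ (r n),
        ‖((B n : Euc d →L[ℝ] Euc d).comp
            ((fderivWithin ℝ (F n ω) Θ θ).comp (C n : Euc d →L[ℝ] Euc d)))
          - (W : Euc d →L[ℝ] Euc d)‖ < ε := by
      intro θ hθ
      by_contra h
      push_neg at h
      exact h4 ⟨θ, hθ, h⟩
    exact stmt14_key hΘ (hFC1 n ω) (B n) (C n) W (hball n) hε hder
      (mem_closedBall_iff_norm.mpr hb1') (mem_closedBall_iff_norm.mpr hb2') hz1' hz2'
  -- real-valued probability helpers
  have pne : ∀ s : Set Ω, P s ≠ ⊤ := fun s => measure_ne_top P s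
  have pmono : ∀ {s t : Set Ω}, s ⊆ t → (P s).toReal ≤ (P t).toReal :=
    fun h => ENNReal.toReal_mono (pne _) (measure_mono h)
  have ple1 : ∀ s : Set Ω, (P s).toReal ≤ 1 := by
    intro s
    have := pmono (Set.subset_univ s)
    simpa [measure_univ] using this
  have hcompl : ∀ s : Set Ω, MeasurableSet s → (P sᶜ).toReal = 1 - (P s).toReal := by
    intro s hs
    rw [prob_compl_eq_one_sub hs, ENNReal.toReal_sub_of_le prob_le_one ENNReal.one_ne_top,
      ENNReal.toReal_one]
  have hsplit : ∀ s t : Set Ω, MeasurableSet t →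
      (P s).toReal ≤ (P (s ∩ t)).toReal + (1 - (P t).toReal) := by
    intro s t ht
    have h1 : P s ≤ P (s ∩ t) + P tᶜ :=
      le_trans (measure_le_inter_add_diff P s t)
        (add_le_add le_rfl (measure_mono fun x hx => hx.2))
    calc (P s).toReal ≤ (P (s ∩ t) + P tᶜ).toReal :=
          ENNReal.toReal_mono (ENNReal.add_ne_top.mpr ⟨pne _, pne _⟩) h1
      _ = (P (s ∩ t)).toReal + (P tᶜ).toReal := ENNReal.toReal_add (pne _) (pne _)
      _ = (P (s ∩ t)).toReal + (1 - (P t).toReal) := by rw [hcompl t ht]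
  have hsub : ∀ s t : Set Ω, (P s).toReal ≤ (P (s ∩ tᶜ)).toReal + (P t).toReal := by
    intro s t
    have h1 : P s ≤ P (s ∩ tᶜ) + P t := by
      refine le_trans (measure_mono (fun x hx => ?_)) (measure_union_le _ _)
      by_cases h : x ∈ t
      · exact Or.inr h
      · exact Or.inl ⟨hx, h⟩
    calc (P s).toReal ≤ (P (s ∩ tᶜ) + P t).toReal :=
          ENNReal.toReal_mono (ENNReal.add_ne_top.mpr ⟨pne _, pne _⟩) h1
      _ = (P (s ∩ tᶜ)).toReal + (P t).toReal := ENNReal.toReal_add (pne _) (pne _)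
  -- chain of inequalities
  have hle : ∀ n, (P (s1 n)).toReal + (P (s3 n)).toReal + (P (s2 n)).toReal
      + (P (s3' n)).toReal - 3 - (P (s4 n)).toReal
      ≤ (P {ω | θhat n ω = θtil n ω}).toReal := by
    intro n
    have c1 : (P (s1 n)).toReal ≤ (P (t1 n)).toReal + (1 - (P (s3 n)).toReal) :=
      le_trans (hsplit (s1 n) (s3 n) (hs3meas n))
        (add_le_add (pmono (hinc1 n)) le_rfl)
    have c2 : (P (s2 n)).toReal ≤ (P (t2 n)).toReal + (1 - (P (s3' n)).toReal) :=
      le_trans (hsplit (s2 n) (s3' n) (hs3'meas n))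
        (add_le_add (pmono (hinc2 n)) le_rfl)
    have c3 : (P (t1 n)).toReal ≤ (P (t1 n ∩ t2 n)).toReal + (1 - (P (t2 n)).toReal) :=
      hsplit (t1 n) (t2 n) (ht2meas n)
    have c4 : (P (t1 n ∩ t2 n)).toReal
        ≤ (P (t1 n ∩ t2 n ∩ (s4 n)ᶜ)).toReal + (P (s4 n)).toReal := hsub _ _
    have c5 : (P (t1 n ∩ t2 n ∩ (s4 n)ᶜ)).toReal
        ≤ (P {ω | θhat n ω = θtil n ω}).toReal := pmono (hincl n)
    linarith
  -- convergence of the lower bound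
  have h4toReal : Filter.Tendsto (fun n => (P (s4 n)).toReal) Filter.atTop (nhds 0) := by
    have h := Filter.Tendsto.comp (ENNReal.tendsto_toReal (a := 0) ENNReal.zero_ne_top)
      (hE2a ε hεpos)
    simpa only [Function.comp_def, ENNReal.toReal_zero] using h
  have hg : Filter.Tendsto (fun n => (P (s1 n)).toReal + (P (s3 n)).toReal
      + (P (s2 n)).toReal + (P (s3' n)).toReal - 3 - (P (s4 n)).toReal)
      Filter.atTop (nhds 1) := by
    have h := ((((hhatzero.add hhatball).add htilzero).add htilball).sub
      (tendsto_const_nhds (x := (3:ℝ)))).sub h4toReal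
    norm_num at h
    exact h
  exact tendsto_of_tendsto_of_tendsto_of_le_of_le hg tendsto_const_nhds hle
    (fun n => ple1 _)
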